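/- With notation as in the cyclotomic number setup, e^2 · (a,b)_e = Σ_{i=0}^{e-1} Σ_{j=0}^{e-1} ζ_e^{-(ai+bj)} · J_e(i,j) (inversion formula expressing cyclotomic numbers from Jacobi sums). -/
import Mathlib

lemma geom_key {e : ℕ} {ζ : ℂ} (hζ : IsPrimitiveRoot ζ e) (c : ℤ) :
    ∑ i ∈ Finset.range e, ζ ^ (c * i) = if (e : ℤ) ∣ c then (e : ℂ) else 0 := by
  have hpow : ∀ i : ℕ, ζ ^ (c * i) = (ζ ^ c) ^ i := by
    intro i; rw [zpow_mul, zpow_natCast]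
  simp_rw [hpow]
  by_cases hd : (e : ℤ) ∣ c
  · rw [if_pos hd, (hζ.zpow_eq_one_iff_dvd c).mpr hd]; simp
  · rw [if_neg hd]
    have hne : ζ ^ c ≠ 1 := fun h => hd ((hζ.zpow_eq_one_iff_dvd c).mp h)
    rw [geom_sum_eq hne]
    have : (ζ ^ c) ^ e = 1 := by
      rw [← zpow_natCast, ← zpow_mul, mul_comm, zpow_mul, zpow_natCast, hζ.pow_eq_one, one_zpow]
    rw [this]; simp

open scoped Classical in
lemma char_sum {F : Type*} [Field F] [Fintype F] [DecidableEq F]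
    (e : ℕ) (he : 2 ≤ e) (hdvd : e ∣ Fintype.card F - 1)
    (γ : Fˣ) (hγ : ∀ x : Fˣ, x ∈ Subgroup.zpowers γ)
    (ζ : ℂ) (hζ : IsPrimitiveRoot ζ e)
    (χ : F → ℂ) (hχ : ∀ m : ℕ, χ ((γ : F) ^ m) = ζ ^ m)
    (c : ℕ) (u : F) :
    ∑ i ∈ Finset.range e, ζ ^ (-((c : ℤ) * i)) * (if u = 0 then 0 else χ u ^ i)
      = if ∃ m : ℕ, (γ : F) ^ m = u ∧ (m : ZMod e) = (c : ZMod e) then (e : ℂ) else 0 := by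
  have hz : ζ ≠ 0 := hζ.ne_zero (by omega)
  by_cases hu : u = 0
  · subst hu
    rw [if_neg (by rintro ⟨m, hm, -⟩; exact pow_ne_zero m γ.ne_zero hm)]
    simp
  · obtain ⟨m, hm⟩ : ∃ m : ℕ, (γ : F) ^ m = u := by
      obtain ⟨m, hm⟩ := (mem_powers_iff_mem_zpowers).mpr (hγ (Units.mk0 u hu))
      exact ⟨m, by simpa using congrArg Units.val hm⟩
    have hχu : χ u = ζ ^ m := by rw [← hm, hχ]
    have key : ∀ i : ℕ, ζ ^ (-((c : ℤ) * i)) * (if u = 0 then 0 else χ u ^ i)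
        = ζ ^ (((m : ℤ) - c) * i) := by
      intro i
      rw [if_neg hu, hχu, ← pow_mul, ← zpow_natCast ζ (m * i), ← zpow_add₀ hz]
      congr 1; push_cast; ring
    simp_rw [key]
    rw [geom_key hζ]
    congr 1
    rw [eq_iff_iff]
    constructor
    · intro hd
      refine ⟨m, hm, ?_⟩
      have h0 : (((m : ℤ) - c : ℤ) : ZMod e) = 0 :=
        (ZMod.intCast_zmod_eq_zero_iff_dvd _ _).mpr hd
      push_cast at h0
      linear_combination h0
    · rintro ⟨n, hn, hnc⟩
      have hord : orderOf γ = Fintype.card F - 1 := by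
        rw [orderOf_eq_card_of_forall_mem_zpowers hγ, Nat.card_eq_fintype_card,
          Fintype.card_units]
      have hmn' : γ ^ m = γ ^ n := Units.ext (by simp [hm, hn])
      have hmod : m ≡ n [MOD e] := (pow_eq_pow_iff_modEq.mp hmn').of_dvd (hord ▸ hdvd)
      have hmc : (m : ZMod e) = (c : ZMod e) := by
        rw [ZMod.natCast_eq_natCast_iff]
        exact hmod.trans ((ZMod.natCast_eq_natCast_iff _ _ _).mp hnc)
      exact (ZMod.intCast_zmod_eq_zero_iff_dvd ((m : ℤ) - c) e).mp
        (by push_cast; rw [hmc, sub_self])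



/-- The cyclotomic number `(a,b)_e` over a finite field `F` with respect to a
generator `γ` of `Fˣ`. -/
noncomputable def cyclo {F : Type*} [Field F] [Fintype F] (γ : Fˣ) (e : ℕ)
    (a b : ZMod e) : ℕ :=
  Nat.card {v : F // ∃ m n : ℕ, (γ : F) ^ m = v ∧ (γ : F) ^ n = v + 1 ∧
    (m : ZMod e) = a ∧ (n : ZMod e) = b}

/-- Inversion formula: `Σ_i Σ_j ζ_e^{-(ai+bj)} J_e(i,j) = e² (a,b)_e`. -/
theorem cyclotomic_eq_inv_sum_jacobi
    {F : Type*} [Field F] [Fintype F] [DecidableEq F]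
    (p r : ℕ) (hp : p.Prime) (hpodd : Odd p) (hcard : Fintype.card F = p ^ r)
    (e : ℕ) (he : 2 ≤ e) (hdvd : e ∣ Fintype.card F - 1)
    (γ : Fˣ) (hγ : ∀ x : Fˣ, x ∈ Subgroup.zpowers γ)
    (ζ : ℂ) (hζ : IsPrimitiveRoot ζ e)
    (χ : F → ℂ) (hχ0 : χ 0 = 0) (hχ : ∀ m : ℕ, χ ((γ : F) ^ m) = ζ ^ m)
    (a b : ℕ) (ha : a ≤ e - 1) (hb : b ≤ e - 1) :
    (∑ i ∈ Finset.range e, ∑ j ∈ Finset.range e,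
        ζ ^ (-((a : ℤ) * i + (b : ℤ) * j)) *
          (∑ v : F, (if v = 0 then 0 else χ v ^ i) *
            (if v + 1 = 0 then 0 else χ (v + 1) ^ j))) =
      (e : ℂ) ^ 2 * (cyclo γ e (a : ZMod e) (b : ZMod e) : ℂ) := by
  classical
  have hz : ζ ≠ 0 := hζ.ne_zero (by omega)
  calc (∑ i ∈ Finset.range e, ∑ j ∈ Finset.range e,
        ζ ^ (-((a : ℤ) * i + (b : ℤ) * j)) *
          (∑ v : F, (if v = 0 then 0 else χ v ^ i) *
            (if v + 1 = 0 then 0 else χ (v + 1) ^ j)))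
      = ∑ v : F, (∑ i ∈ Finset.range e, ζ ^ (-((a : ℤ) * i)) * (if v = 0 then 0 else χ v ^ i)) *
          (∑ j ∈ Finset.range e, ζ ^ (-((b : ℤ) * j)) *
            (if v + 1 = 0 then 0 else χ (v + 1) ^ j)) := by
        simp_rw [Finset.mul_sum]
        have swap : ∀ (f : ℕ → F → ℂ), (∑ i ∈ Finset.range e, ∑ v : F, f i v)
            = ∑ v : F, ∑ i ∈ Finset.range e, f i v := fun f => Finset.sum_comm
        simp_rw [swap]
        refine Finset.sum_congr rfl fun v _ => ?_
        rw [Finset.sum_comm]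
        refine Finset.sum_congr rfl fun j _ => ?_
        rw [Finset.sum_mul]
        refine Finset.sum_congr rfl fun i _ => ?_
        rw [neg_add, zpow_add₀ hz]
        ring
      _ = ∑ v : F, (if ∃ m : ℕ, (γ : F) ^ m = v ∧ (m : ZMod e) = (a : ZMod e)
              then (e : ℂ) else 0) *
            (if ∃ n : ℕ, (γ : F) ^ n = v + 1 ∧ (n : ZMod e) = (b : ZMod e)
              then (e : ℂ) else 0) := by
        refine Finset.sum_congr rfl fun v _ => ?_
        rw [char_sum e he hdvd γ hγ ζ hζ χ hχ a v, char_sum e he hdvd γ hγ ζ hζ χ hχ b (v + 1)]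
      _ = ∑ v : F, (if (∃ m : ℕ, (γ : F) ^ m = v ∧ (m : ZMod e) = (a : ZMod e)) ∧
              (∃ n : ℕ, (γ : F) ^ n = v + 1 ∧ (n : ZMod e) = (b : ZMod e))
            then ((e : ℂ) ^ 2) else 0) := by
        refine Finset.sum_congr rfl fun v _ => ?_
        split_ifs with h1 h2 h3 <;> simp_all [sq] <;> tauto
      _ = (e : ℂ) ^ 2 * (cyclo γ e (a : ZMod e) (b : ZMod e) : ℂ) := by
        rw [Finset.sum_ite, Finset.sum_const_zero, add_zero, Finset.sum_const, nsmul_eq_mul,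
          mul_comm]
        congr 1
        norm_cast
        rw [cyclo, Nat.card_eq_fintype_card, Fintype.card_subtype]
        congr 1
        apply Finset.filter_congr
        intro v _
        simp only [Units.val_pow_eq_pow_val]
        constructor
        · rintro ⟨h1, h2⟩
          obtain ⟨m, hm, hma⟩ := h1
          obtain ⟨n, hn, hnb⟩ := h2
          exact ⟨m, n, hm, hn, hma, hnb⟩
        · rintro ⟨m, n, hm, hn, hma, hnb⟩
          exact ⟨⟨m, hm, hma⟩, ⟨n, hn, hnb⟩⟩
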